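/- Let G be a group generated by a finite subset S, equipped with the associated word length metric. Let ε > 0 and N ∈ ℕ. Suppose f : G → [0,∞) satisfies Σ_{γ∈G} f(γ)² = 1, Σ_{γ∈G} (f(γ) − f(γs))² ≤ ε² for every s ∈ S, and the support of f has cardinality at most N. Then there exists a function g : G → [0,∞) with Σ_{γ∈G} g(γ)² = 1, Σ_{γ∈G} (g(γ) − g(γs))² ≤ ε² for every s ∈ S, and the support of g contained in the word-metric ball B(1_G, 4(N+2)N), i.e. every element of the support is a product of at most 4(N+2)N elements of S ∪ S⁻¹. -/

import Mathlib

/-- The word-metric ball `B(1_G, D)` with respect to a generating set `S`: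
the set of elements of `G` expressible as a product of at most `D` elements
of `S ∪ S⁻¹`. -/
def wordBall {G : Type*} [Group G] (S : Set G) (D : ℕ) : Set G :=
  {g | ∃ l : List G, l.length ≤ D ∧ (∀ x ∈ l, x ∈ S ∨ x⁻¹ ∈ S) ∧ l.prod = g}

namespace WB
variable {G : Type*} [Group G] (S : Set G)

theorem wordBall_mono {D D' : ℕ} (h : D ≤ D') : wordBall S D ⊆ wordBall S D' :=
  fun _ ⟨l, hl, hx, hp⟩ => ⟨l, hl.trans h, hx, hp⟩

/-- word length -/
noncomputable def wlen (g : G) : ℕ := sInf {n | g ∈ wordBall S n}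

variable {S}

theorem exists_mem (hgen : Subgroup.closure S = ⊤) (g : G) : ∃ n, g ∈ wordBall S n := by
  have hg : g ∈ Subgroup.closure S := hgen ▸ Subgroup.mem_top g
  induction hg using Subgroup.closure_induction with
  | mem x hx => exact ⟨1, [x], by simp, by simp [hx], by simp⟩
  | one => exact ⟨0, [], by simp, by simp, by simp⟩
  | mul x y _ _ hx hy =>
    obtain ⟨n, l, hl, hm, hp⟩ := hx
    obtain ⟨n', l', hl', hm', hp'⟩ := hy
    exact ⟨n + n', l ++ l', by simpa using Nat.add_le_add hl hl',
      by intro x hx; rcases List.mem_append.1 hx with h | h; exacts [hm x h, hm' x h],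
      by simp [hp, hp']⟩
  | inv x _ hx =>
    obtain ⟨n, l, hl, hm, hp⟩ := hx
    refine ⟨n, (l.map (·⁻¹)).reverse, by simpa using hl, ?_, ?_⟩
    · intro y hy
      simp only [List.mem_reverse, List.mem_map] at hy
      obtain ⟨z, hz, rfl⟩ := hy
      rcases hm z hz with h | h
      · exact Or.inr (by simpa using h)
      · exact Or.inl h
    · rw [← hp, List.prod_reverse_noncomm]; simp

variable (hgen : Subgroup.closure S = ⊤)
include hgen

theorem wlen_spec (g : G) : g ∈ wordBall S (wlen S g) :=
  Nat.sInf_mem (exists_mem hgen g)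

theorem wlen_le (g : G) {n : ℕ} (h : g ∈ wordBall S n) : wlen S g ≤ n := Nat.sInf_le h

theorem mem_ball_of_wlen_le (g : G) {n : ℕ} (h : wlen S g ≤ n) : g ∈ wordBall S n :=
  wordBall_mono S h (wlen_spec hgen g)

theorem exists_min_list (g : G) :
    ∃ l : List G, l.length = wlen S g ∧ (∀ x ∈ l, x ∈ S ∨ x⁻¹ ∈ S) ∧ l.prod = g := by
  obtain ⟨l, hl, hm, hp⟩ := wlen_spec hgen g
  exact ⟨l, le_antisymm hl (wlen_le hgen g ⟨l, le_refl _, hm, hp⟩), hm, hp⟩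

theorem wlen_one : wlen S (1 : G) = 0 :=
  Nat.le_zero.mp (wlen_le hgen 1 ⟨[], by simp, by simp, by simp⟩)

theorem wlen_mul_le (g h : G) : wlen S (g * h) ≤ wlen S g + wlen S h := by
  obtain ⟨l, hl, hm, hp⟩ := exists_min_list hgen g
  obtain ⟨l', hl', hm', hp'⟩ := exists_min_list hgen h
  refine wlen_le hgen _ ⟨l ++ l', by simp [hl, hl'], ?_, by simp [hp, hp']⟩
  intro x hx; rcases List.mem_append.1 hx with h | h; exacts [hm x h, hm' x h]

theorem wlen_inv_le (g : G) : wlen S g⁻¹ ≤ wlen S g := by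
  obtain ⟨l, hl, hm, hp⟩ := exists_min_list hgen g
  refine wlen_le hgen _ ⟨(l.map (·⁻¹)).reverse, by simp [hl], ?_, ?_⟩
  · intro y hy
    simp only [List.mem_reverse, List.mem_map] at hy
    obtain ⟨z, hz, rfl⟩ := hy
    rcases hm z hz with h | h
    · exact Or.inr (by simpa using h)
    · exact Or.inl h
  · rw [← hp, List.prod_reverse_noncomm]; simp

theorem wlen_inv (g : G) : wlen S g⁻¹ = wlen S g :=
  le_antisymm (wlen_inv_le hgen g) (by simpa using wlen_inv_le hgen g⁻¹)

/-- triangle: wlen (x⁻¹ z) ≤ wlen (x⁻¹ y) + wlen (y⁻¹ z) -/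
theorem wlen_tri (x y z : G) : wlen S (x⁻¹ * z) ≤ wlen S (x⁻¹ * y) + wlen S (y⁻¹ * z) := by
  have := wlen_mul_le hgen (x⁻¹ * y) (y⁻¹ * z)
  simpa [mul_assoc] using this

theorem wlen_symm (x y : G) : wlen S (x⁻¹ * y) = wlen S (y⁻¹ * x) := by
  rw [← wlen_inv hgen (y⁻¹ * x)]; simp

/-- Spheres are nonempty up to the radius of any element outside a ball. -/
theorem sphere_nonempty {z : G} {Db : ℕ} (hz : z ∉ wordBall S Db) {m : ℕ} (hm : m ≤ Db) :
    ∃ p : G, wlen S p = m := by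
  have hzl : Db < wlen S z := by
    by_contra h
    exact hz (mem_ball_of_wlen_le hgen z (not_lt.1 h))
  obtain ⟨l, hl, hmem, hp⟩ := exists_min_list hgen z
  have hmz : m ≤ wlen S z := hm.trans hzl.le
  refine ⟨(l.take m).prod, le_antisymm ?_ ?_⟩
  · refine wlen_le hgen _ ⟨l.take m, by simp, fun x hx => hmem x (List.mem_of_mem_take hx), rfl⟩
  · have hsplit : z = (l.take m).prod * (l.drop m).prod := by
      rw [← List.prod_append, List.take_append_drop, hp]
    have h1 : wlen S z ≤ wlen S (l.take m).prod + wlen S (l.drop m).prod := by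
      rw [hsplit] at *; exact wlen_mul_le hgen _ _
    have h2 : wlen S (l.drop m).prod ≤ l.length - m := by
      refine wlen_le hgen _ ⟨l.drop m, by simp, fun x hx => hmem x (List.mem_of_mem_drop hx), rfl⟩
    omega

end WB

namespace WB
open SimpleGraph
variable {G : Type*} [Group G] {S : Set G} (hgen : Subgroup.closure S = ⊤)

/-- Proximity graph at scale 3 on a finite subset of the group. -/
def Gr (S : Set G) (A : Finset G) : SimpleGraph ↥A where
  Adj x y := x ≠ y ∧ (wlen S ((x : G)⁻¹ * y) ≤ 3 ∨ wlen S ((y : G)⁻¹ * x) ≤ 3)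
  symm := by constructor; intro x y ⟨h1, h2⟩; exact ⟨h1.symm, h2.symm⟩
  loopless := by constructor; intro x ⟨h1, _⟩; exact h1 rfl

include hgen

theorem adj_wlen {A : Finset G} {x y : ↥A} (h : (Gr S A).Adj x y) :
    wlen S ((x : G)⁻¹ * y) ≤ 3 := by
  rcases h.2 with h | h
  · exact h
  · rw [wlen_symm hgen]; exact h

theorem walk_wlen {A : Finset G} {x y : ↥A} (w : (Gr S A).Walk x y) :
    wlen S ((x : G)⁻¹ * y) ≤ 3 * w.length := by
  induction w with
  | nil => simp [wlen_one hgen]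
  | @cons a b c hab w ih =>
    calc wlen S ((a : G)⁻¹ * c) ≤ wlen S ((a : G)⁻¹ * b) + wlen S ((b : G)⁻¹ * c) :=
          wlen_tri hgen _ _ _
    _ ≤ 3 + 3 * w.length := Nat.add_le_add (adj_wlen hgen hab) ih
    _ ≤ 3 * (w.cons hab).length := by rw [Walk.length_cons]; omega

omit hgen

theorem reachable_of_mem_support {A : Finset G} {x y v : ↥A} (w : (Gr S A).Walk x y)
    (hv : v ∈ w.support) : (Gr S A).Reachable x v := by
  induction w with
  | nil => simp at hv; exact hv ▸ Reachable.refl _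
  | @cons a b c hab w ih =>
    rw [Walk.support_cons, List.mem_cons] at hv
    rcases hv with rfl | hv
    · exact Reachable.refl _
    · exact (Adj.reachable hab).trans (ih hv)

end WB

namespace WB
open SimpleGraph
variable {G : Type*} [Group G] {S : Set G}

theorem reachable_wlen (hgen : Subgroup.closure S = ⊤) {A : Finset G} {x y : ↥A}
    (h : (Gr S A).Reachable x y) (t : Finset ↥A)
    (ht : ∀ v : ↥A, (Gr S A).Reachable x v → v ∈ t) :
    wlen S ((x : G)⁻¹ * y) + 3 ≤ 3 * t.card := by
  classical
  obtain ⟨w⟩ := h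
  set p := w.toPath with hp
  have h1 : wlen S ((x : G)⁻¹ * y) ≤ 3 * p.1.length := walk_wlen hgen p.1
  have hsub : p.1.support.toFinset ⊆ t := by
    intro v hv
    rw [List.mem_toFinset] at hv
    exact ht v (reachable_of_mem_support p.1 hv)
  have hcard : p.1.support.toFinset.card = p.1.length + 1 := by
    rw [List.toFinset_card_of_nodup p.2.support_nodup, Walk.length_support]
  have := Finset.card_le_card hsub
  omega

end WB

open WB SimpleGraph

theorem stmt_3 {G : Type*} [Group G] (S : Finset G)
    (hgen : Subgroup.closure (S : Set G) = ⊤)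
    (ε : ℝ) (hε : 0 < ε) (N : ℕ) (f : G → ℝ)
    (hf0 : ∀ γ, 0 ≤ f γ)
    (hl2 : ∑' γ, f γ ^ 2 = 1)
    (hinv : ∀ s ∈ S, ∑' γ, (f γ - f (γ * s)) ^ 2 ≤ ε ^ 2)
    (hsupp : (Function.support f).Finite)
    (hcard : Nat.card (Function.support f) ≤ N) :
    ∃ g : G → ℝ, (∀ γ, 0 ≤ g γ) ∧ (∑' γ, g γ ^ 2 = 1) ∧
      (∀ s ∈ S, ∑' γ, (g γ - g (γ * s)) ^ 2 ≤ ε ^ 2) ∧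
      Function.support g ⊆ wordBall (S : Set G) (4 * (N + 2) * N) := by
  classical
  set Db := 4 * (N + 2) * N with hDb
  by_cases hball : ∀ x : G, x ∈ wordBall (S : Set G) Db
  · exact ⟨f, hf0, hl2, hinv, fun x _ => hball x⟩
  push_neg at hball
  obtain ⟨z, hz⟩ := hball
  set A : Finset G := hsupp.toFinset with hAdef
  have hA : ∀ γ : G, γ ∈ A ↔ f γ ≠ 0 := by
    intro γ; rw [hAdef, Set.Finite.mem_toFinset]; rfl
  have hf_zero : ∀ γ : G, γ ∉ A → f γ = 0 := by
    intro γ h; by_contra h'; exact h ((hA γ).mpr h')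
  have hAN : A.card ≤ N := by
    have : Nat.card ↥(Function.support f) = A.card := by
      rw [Nat.card_coe_set_eq, Set.ncard_eq_toFinset_card _ hsupp]
    omega
  set Γ := Gr (S : Set G) A with hΓ
  set k := Fintype.card Γ.ConnectedComponent with hk
  set e : Fin k ≃ Γ.ConnectedComponent := (Fintype.equivFin Γ.ConnectedComponent).symm with he
  set fib : Γ.ConnectedComponent → Finset ↥A :=
    fun c => Finset.univ.filter (fun v => Γ.connectedComponentMk v = c) with hfib
  set Af : Fin k → Finset G := fun i => (fib (e i)).image Subtype.val with hAf
  set n : Fin k → ℕ := fun i => (Af i).card with hn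
  -- membership characterization
  have hmemAf : ∀ (i : Fin k) (u : G),
      u ∈ Af i ↔ ∃ hu : u ∈ A, Γ.connectedComponentMk ⟨u, hu⟩ = e i := by
    intro i u
    simp only [hAf, Finset.mem_image, hfib, Finset.mem_filter, Finset.mem_univ, true_and]
    constructor
    · rintro ⟨v, hv, rfl⟩; exact ⟨v.2, hv⟩
    · rintro ⟨hu, h⟩; exact ⟨⟨u, hu⟩, h, rfl⟩
  have hAfA : ∀ i : Fin k, Af i ⊆ A := by
    intro i u hu; exact ((hmemAf i u).1 hu).choose
  have hcover : ∀ u ∈ A, ∃ i : Fin k, u ∈ Af i := by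
    intro u hu
    exact ⟨e.symm (Γ.connectedComponentMk ⟨u, hu⟩), (hmemAf _ u).2 ⟨hu, by simp⟩⟩
  have hdisj : ∀ i j : Fin k, i ≠ j → ∀ u : G, u ∈ Af i → u ∈ Af j → False := by
    intro i j hij u hui huj
    obtain ⟨h1, h2⟩ := (hmemAf i u).1 hui
    obtain ⟨h1', h2'⟩ := (hmemAf j u).1 huj
    exact hij (e.injective (h2.symm.trans h2'))
  have hsep : ∀ i j : Fin k, i ≠ j → ∀ x y : G, x ∈ Af i → y ∈ Af j →
      ¬ wlen (S : Set G) (x⁻¹ * y) ≤ 3 := by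
    intro i j hij x y hx hy hw
    obtain ⟨hxA, hx2⟩ := (hmemAf i x).1 hx
    obtain ⟨hyA, hy2⟩ := (hmemAf j y).1 hy
    by_cases hxy : x = y
    · exact hdisj i j hij x hx (hxy ▸ hy)
    · have hadj : Γ.Adj ⟨x, hxA⟩ ⟨y, hyA⟩ := ⟨by simpa using hxy, Or.inl hw⟩
      have : Γ.connectedComponentMk ⟨x, hxA⟩ = Γ.connectedComponentMk ⟨y, hyA⟩ :=
        ConnectedComponent.connectedComponentMk_eq_of_adj hadj
      exact hij (e.injective (hx2.symm.trans (this.trans hy2)))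
  have hdiam : ∀ (i : Fin k), ∀ x y : G, x ∈ Af i → y ∈ Af i →
      wlen (S : Set G) (x⁻¹ * y) + 3 ≤ 3 * n i := by
    intro i x y hx hy
    obtain ⟨hxA, hx2⟩ := (hmemAf i x).1 hx
    obtain ⟨hyA, hy2⟩ := (hmemAf i y).1 hy
    have hreach : Γ.Reachable ⟨x, hxA⟩ ⟨y, hyA⟩ :=
      ConnectedComponent.exact (hx2.trans hy2.symm)
    have h3 := reachable_wlen hgen hreach (fib (e i)) ?_
    · have h3' : wlen (S : Set G) (x⁻¹ * y) + 3 ≤ 3 * (fib (e i)).card := h3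
      have hcardim : (fib (e i)).card = n i := by
        rw [hn, hAf]
        exact (Finset.card_image_of_injective _ Subtype.val_injective).symm
      omega
    · intro v hv
      rw [hfib]
      simp only [Finset.mem_filter, Finset.mem_univ, true_and]
      rw [← hx2]
      exact (ConnectedComponent.sound hv.symm)
  -- counting
  have hone : ∀ i : Fin k, 1 ≤ n i := by
    intro i
    obtain ⟨v, hv⟩ := Quot.exists_rep (e i)
    have : (v : G) ∈ Af i := (hmemAf i v).2 ⟨v.2, hv⟩
    rw [hn]
    exact Finset.card_pos.mpr ⟨v, this⟩
  have hsum_n : ∑ i : Fin k, n i = A.card := by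
    have h1 : (Finset.univ : Finset ↥A).card
        = ∑ c ∈ (Finset.univ : Finset Γ.ConnectedComponent), (fib c).card := by
      rw [hfib]
      exact Finset.card_eq_sum_card_fiberwise (fun v _ => Finset.mem_univ _)
    have h2 : ∑ i : Fin k, n i = ∑ c : Γ.ConnectedComponent, (fib c).card := by
      rw [← Equiv.sum_comp e (fun c => (fib c).card)]
      refine Finset.sum_congr rfl fun i _ => ?_
      rw [hn, hAf]
      exact Finset.card_image_of_injective _ Subtype.val_injective
    rw [h2, ← h1, Finset.card_univ, Fintype.card_coe]
  have hkA : k ≤ A.card := by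
    have : Function.Surjective (fun v : ↥A => Γ.connectedComponentMk v) :=
      fun c => Quot.exists_rep c
    have := Fintype.card_le_of_surjective _ this
    rw [← hk] at this
    rwa [Fintype.card_coe] at this
  -- choose base points
  have hane : ∀ i : Fin k, ∃ u : G, u ∈ Af i := by
    intro i
    obtain ⟨v, hv⟩ := Quot.exists_rep (e i)
    exact ⟨v, (hmemAf i v).2 ⟨v.2, hv⟩⟩
  choose a ha using hane
  -- diameters and positions
  set D : Fin k → ℕ := fun i => 3 * (n i - 1) with hD
  have hdiam' : ∀ (i : Fin k), ∀ x y : G, x ∈ Af i → y ∈ Af i →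
      wlen (S : Set G) (x⁻¹ * y) ≤ D i := by
    intro i x y hx hy
    have := hdiam i x y hx hy
    have := hone i
    simp only [hD]; omega
  set D' : ℕ → ℕ := fun m => if h : m < k then D ⟨m, h⟩ else 0 with hD'
  set r : Fin k → ℕ := fun i => 3 * i.val + 2 * (∑ l ∈ Finset.range i.val, D' l) + D i with hr
  have hD'eq : ∀ i : Fin k, D' i.val = D i := by
    intro i; rw [hD']; simp [i.isLt]
  have hsumD : ∑ l ∈ Finset.range k, D' l + 3 * k = 3 * A.card := by
    rw [← Fin.sum_univ_eq_sum_range]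
    have : ∑ i : Fin k, D' i.val = ∑ i : Fin k, 3 * (n i - 1) := by
      refine Finset.sum_congr rfl fun i _ => ?_
      rw [hD'eq i, hD]
    rw [this, ← Finset.mul_sum]
    have h4 : ∑ i : Fin k, (n i - 1) + k = A.card := by
      have : ∑ i : Fin k, (n i - 1) + ∑ _i : Fin k, 1 = ∑ i : Fin k, n i := by
        rw [← Finset.sum_add_distrib]
        exact Finset.sum_congr rfl fun i _ => by have := hone i; omega
      simp only [Finset.sum_const, Finset.card_univ, Fintype.card_fin, smul_eq_mul, mul_one] at this
      omega
    omega
  have hrmono : ∀ i j : Fin k, i < j → r i + D i + D j + 3 ≤ r j := by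
    intro i j hij
    have hsub : ∑ l ∈ Finset.range (i.val + 1), D' l ≤ ∑ l ∈ Finset.range j.val, D' l :=
      Finset.sum_le_sum_of_subset (Finset.range_subset_range.mpr hij)
    rw [Finset.sum_range_succ, hD'eq i] at hsub
    have : i.val + 1 ≤ j.val := hij
    simp only [hr]; omega
  have hrbound : ∀ i : Fin k, r i + D i ≤ 6 * N := by
    intro i
    have hsub : ∑ l ∈ Finset.range (i.val + 1), D' l ≤ ∑ l ∈ Finset.range k, D' l :=
      Finset.sum_le_sum_of_subset (Finset.range_subset_range.mpr i.isLt)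
    rw [Finset.sum_range_succ, hD'eq i] at hsub
    have hik : i.val < k := i.isLt
    simp only [hr]; omega
  have h6Db : 6 * N ≤ Db := by
    rw [hDb]
    exact Nat.mul_le_mul_right N (by omega)
  have hpex : ∀ i : Fin k, ∃ p : G, wlen (S : Set G) p = r i := by
    intro i
    exact sphere_nonempty hgen hz (by have h1 := hrbound i; have h2 := h6Db; omega)
  choose p hp using hpex
  -- translated clusters
  set T : Fin k → Finset G := fun i => (Af i).image (fun u => p i * (a i)⁻¹ * u) with hT
  have hmemT : ∀ (i : Fin k) (x : G), x ∈ T i ↔ a i * (p i)⁻¹ * x ∈ Af i := by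
    intro i x
    rw [hT]
    simp only [Finset.mem_image]
    constructor
    · rintro ⟨u, hu, rfl⟩
      have : a i * (p i)⁻¹ * (p i * (a i)⁻¹ * u) = u := by group
      rwa [this]
    · intro h
      exact ⟨a i * (p i)⁻¹ * x, h, by group⟩
  have hTup : ∀ (i : Fin k) (x : G), x ∈ T i → wlen (S : Set G) x ≤ r i + D i := by
    intro i x hx
    rw [hT] at hx
    simp only [Finset.mem_image] at hx
    obtain ⟨u, hu, rfl⟩ := hx
    calc wlen (S : Set G) (p i * (a i)⁻¹ * u)
        ≤ wlen (S : Set G) (p i) + wlen (S : Set G) ((a i)⁻¹ * u) := by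
          have := wlen_mul_le hgen (p i) ((a i)⁻¹ * u)
          simpa [mul_assoc] using this
      _ ≤ r i + D i := Nat.add_le_add (le_of_eq (hp i)) (hdiam' i (a i) u (ha i) hu)
  have hTlo : ∀ (i : Fin k) (x : G), x ∈ T i → r i ≤ wlen (S : Set G) x + D i := by
    intro i x hx
    rw [hT] at hx
    simp only [Finset.mem_image] at hx
    obtain ⟨u, hu, rfl⟩ := hx
    have key : wlen (S : Set G) (p i)
        ≤ wlen (S : Set G) (p i * (a i)⁻¹ * u) + wlen (S : Set G) (u⁻¹ * a i) := by
      have := wlen_mul_le hgen (p i * (a i)⁻¹ * u) (u⁻¹ * a i)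
      have heq : p i * (a i)⁻¹ * u * (u⁻¹ * a i) = p i := by group
      rwa [heq] at this
    have h2 : wlen (S : Set G) (u⁻¹ * a i) ≤ D i := hdiam' i u (a i) hu (ha i)
    rw [← hp i]
    omega
  have hTsep : ∀ i j : Fin k, i ≠ j → ∀ x y : G, x ∈ T i → y ∈ T j →
      ¬ wlen (S : Set G) (x⁻¹ * y) ≤ 2 := by
    have main : ∀ i j : Fin k, i < j → ∀ x y : G, x ∈ T i → y ∈ T j →
        ¬ wlen (S : Set G) (x⁻¹ * y) ≤ 2 := by
      intro i j hij x y hx hy hw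
      have h1 : r j ≤ wlen (S : Set G) y + D j := hTlo j y hy
      have h2 : wlen (S : Set G) y ≤ wlen (S : Set G) x + wlen (S : Set G) (x⁻¹ * y) := by
        have := wlen_mul_le hgen x (x⁻¹ * y)
        simpa [mul_assoc] using this
      have h3 : wlen (S : Set G) x ≤ r i + D i := hTup i x hx
      have h4 := hrmono i j hij
      omega
    intro i j hij x y hx hy hw
    rcases lt_or_gt_of_ne hij with h | h
    · exact main i j h x y hx hy hw
    · rw [wlen_symm hgen] at hw
      exact main j i h y x hy hx hw
  have hTdisj : ∀ i j : Fin k, i ≠ j → ∀ x : G, x ∈ T i → x ∈ T j → False := by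
    intro i j hij x hx hy
    refine hTsep i j hij x x hx hy ?_
    simp [wlen_one hgen]
  -- the new function
  set g : G → ℝ := fun h => ∑ i : Fin k, if h ∈ T i then f (a i * (p i)⁻¹ * h) else 0 with hg
  have hg0 : ∀ γ : G, 0 ≤ g γ := by
    intro γ
    simp only [hg]
    refine Finset.sum_nonneg fun i _ => ?_
    split
    · exact hf0 _
    · exact le_refl 0
  have hgeq : ∀ (i : Fin k) (x : G), x ∈ T i → g x = f (a i * (p i)⁻¹ * x) := by
    intro i x hx
    simp only [hg]
    rw [Finset.sum_eq_single i]
    · rw [if_pos hx]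
    · intro j _ hji
      rw [if_neg]
      intro hxj
      exact hTdisj j i hji x hxj hx
    · intro h
      exact absurd (Finset.mem_univ i) h
  have hgz : ∀ x : G, (∀ i : Fin k, x ∉ T i) → g x = 0 := by
    intro x hx
    simp only [hg]
    exact Finset.sum_eq_zero fun i _ => if_neg (hx i)
  refine ⟨g, hg0, ?_, ?_, ?_⟩
  · -- l2 norm is 1
    have hU : ∀ b : G, b ∉ Finset.univ.biUnion T → g b ^ 2 = 0 := by
      intro b hb
      rw [Finset.mem_biUnion] at hb
      push_neg at hb
      rw [hgz b (fun i => hb i (Finset.mem_univ i))]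
      ring
    rw [tsum_eq_sum (L := SummationFilter.unconditional G) hU]
    have hTdisj' : Set.PairwiseDisjoint ↑(Finset.univ : Finset (Fin k)) T := by
      intro i _ j _ hij
      exact Finset.disjoint_left.mpr fun x hxi hxj => hTdisj i j hij x hxi hxj
    rw [Finset.sum_biUnion hTdisj']
    have hstep : ∀ i : Fin k, ∑ x ∈ T i, g x ^ 2 = ∑ u ∈ Af i, f u ^ 2 := by
      intro i
      have h1 : ∑ x ∈ T i, g x ^ 2 = ∑ x ∈ T i, f (a i * (p i)⁻¹ * x) ^ 2 :=
        Finset.sum_congr rfl fun x hx => by rw [hgeq i x hx]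
      rw [h1]
      simp only [hT]
      rw [Finset.sum_image (by intro x _ y _ h; exact mul_left_cancel h)]
      refine Finset.sum_congr rfl fun u _ => ?_
      have h2 : a i * (p i)⁻¹ * (p i * (a i)⁻¹ * u) = u := by group
      rw [h2]
    rw [Finset.sum_congr rfl (fun i _ => hstep i)]
    have hAeq : Finset.univ.biUnion Af = A := by
      ext u
      rw [Finset.mem_biUnion]
      constructor
      · rintro ⟨i, _, hu⟩; exact hAfA i hu
      · intro hu; obtain ⟨i, hi⟩ := hcover u hu; exact ⟨i, Finset.mem_univ i, hi⟩
    have hAfdisj : Set.PairwiseDisjoint ↑(Finset.univ : Finset (Fin k)) Af := by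
      intro i _ j _ hij
      exact Finset.disjoint_left.mpr fun x hxi hxj => hdisj i j hij x hxi hxj
    rw [← Finset.sum_biUnion hAfdisj, hAeq]
    rw [← tsum_eq_sum (L := SummationFilter.unconditional G) (s := A) (fun b hb => by rw [hf_zero b hb]; ring)]
    exact hl2
  · -- almost invariance
    intro s hs
    have hslen : wlen (S : Set G) s ≤ 1 := by
      refine wlen_le hgen s ⟨[s], by simp, ?_, by simp⟩
      intro x hx
      simp only [List.mem_singleton] at hx
      subst hx
      exact Or.inl (Finset.mem_coe.mpr hs)
    set Hf : Fin k → Finset G := fun i => T i ∪ (T i).image (fun u => u * s⁻¹) with hHf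
    have hTHf : ∀ i : Fin k, T i ⊆ Hf i := by
      intro i
      simp only [hHf]
      exact Finset.subset_union_left
    have hnear : ∀ (i : Fin k) (x : G), x ∈ Hf i →
        ∃ u : G, u ∈ T i ∧ wlen (S : Set G) (u⁻¹ * x) ≤ 1 := by
      intro i x hx
      simp only [hHf, Finset.mem_union, Finset.mem_image] at hx
      rcases hx with hx | ⟨u, hu, rfl⟩
      · exact ⟨x, hx, by simp [wlen_one hgen]⟩
      · refine ⟨u, hu, ?_⟩
        have h1 : u⁻¹ * (u * s⁻¹) = s⁻¹ := by group
        rw [h1, wlen_inv hgen]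
        exact hslen
    have hHdisj : ∀ i j : Fin k, i ≠ j → ∀ x : G, x ∈ Hf i → x ∈ Hf j → False := by
      intro i j hij x hxi hxj
      obtain ⟨u, hu, hux⟩ := hnear i x hxi
      obtain ⟨v, hv, hvx⟩ := hnear j x hxj
      refine hTsep i j hij u v hu hv ?_
      have h1 := wlen_tri hgen u x v
      rw [wlen_symm hgen x v] at h1
      omega
    have hval1 : ∀ (i : Fin k) (x : G), x ∈ Hf i → g x = f (a i * (p i)⁻¹ * x) := by
      intro i x hx
      by_cases hxT : x ∈ T i
      · exact hgeq i x hxT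
      · obtain ⟨u, hu, hux⟩ := hnear i x hx
        have hgx : g x = 0 := by
          apply hgz
          intro j hxj
          by_cases hij : j = i
          · exact hxT (hij ▸ hxj)
          · exact hTsep i j (Ne.symm hij) u x hu hxj (by omega)
        have hfx : f (a i * (p i)⁻¹ * x) = 0 := by
          by_contra hne
          obtain ⟨j, hj⟩ := hcover _ ((hA _).mpr hne)
          by_cases hij : j = i
          · subst hij
            exact hxT ((hmemT j x).mpr hj)
          · have hu' : a i * (p i)⁻¹ * u ∈ Af i := (hmemT i u).mp hu
            refine hsep i j (Ne.symm hij) _ _ hu' hj ?_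
            have h2 : (a i * (p i)⁻¹ * u)⁻¹ * (a i * (p i)⁻¹ * x) = u⁻¹ * x := by group
            rw [h2]
            omega
        rw [hgx, hfx]
    have hval2 : ∀ (i : Fin k) (x : G), x ∈ Hf i → g (x * s) = f (a i * (p i)⁻¹ * x * s) := by
      intro i x hx
      obtain ⟨u, hu, hux⟩ := hnear i x hx
      have huxs : wlen (S : Set G) (u⁻¹ * (x * s)) ≤ 2 := by
        have h1 := wlen_tri hgen u x (x * s)
        have h2 : x⁻¹ * (x * s) = s := by group
        rw [h2] at h1
        omega
      by_cases hxT : x * s ∈ T i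
      · have h3 := hgeq i (x * s) hxT
        have h4 : a i * (p i)⁻¹ * (x * s) = a i * (p i)⁻¹ * x * s := by group
        rw [h3, h4]
      · have hgx : g (x * s) = 0 := by
          apply hgz
          intro j hxj
          by_cases hij : j = i
          · exact hxT (hij ▸ hxj)
          · exact hTsep i j (Ne.symm hij) u (x * s) hu hxj (by omega)
        have hfx : f (a i * (p i)⁻¹ * x * s) = 0 := by
          by_contra hne
          obtain ⟨j, hj⟩ := hcover _ ((hA _).mpr hne)
          by_cases hij : j = i
          · subst hij
            apply hxT
            apply (hmemT j (x * s)).mpr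
            have h5 : a j * (p j)⁻¹ * (x * s) = a j * (p j)⁻¹ * x * s := by group
            rw [h5]
            exact hj
          · have hu' : a i * (p i)⁻¹ * u ∈ Af i := (hmemT i u).mp hu
            refine hsep i j (Ne.symm hij) _ _ hu' hj ?_
            have h6 : (a i * (p i)⁻¹ * u)⁻¹ * (a i * (p i)⁻¹ * x * s) = u⁻¹ * (x * s) := by group
            rw [h6]
            omega
        rw [hgx, hfx]
    -- rewrite the tsum as a finite sum over the union of the Hf i
    have hUH : ∀ b : G, b ∉ Finset.univ.biUnion Hf → (g b - g (b * s)) ^ 2 = 0 := by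
      intro b hb
      rw [Finset.mem_biUnion] at hb
      push_neg at hb
      have h1 : g b = 0 := hgz b fun i hbT => (hb i (Finset.mem_univ i)) (hTHf i hbT)
      have h2 : g (b * s) = 0 := by
        apply hgz
        intro i hbT
        apply hb i (Finset.mem_univ i)
        simp only [hHf, Finset.mem_union, Finset.mem_image]
        right
        exact ⟨b * s, hbT, by group⟩
      rw [h1, h2]
      ring
    rw [tsum_eq_sum (L := SummationFilter.unconditional G) hUH]
    have hHdisj' : Set.PairwiseDisjoint ↑(Finset.univ : Finset (Fin k)) Hf := by
      intro i _ j _ hij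
      exact Finset.disjoint_left.mpr fun x hxi hxj => hHdisj i j hij x hxi hxj
    rw [Finset.sum_biUnion hHdisj']
    set K : Fin k → Finset G := fun i => (Hf i).image (fun x => a i * (p i)⁻¹ * x) with hK
    have hstep : ∀ i : Fin k, ∑ x ∈ Hf i, (g x - g (x * s)) ^ 2
        = ∑ u ∈ K i, (f u - f (u * s)) ^ 2 := by
      intro i
      have h1 : ∑ x ∈ Hf i, (g x - g (x * s)) ^ 2
          = ∑ x ∈ Hf i, (f (a i * (p i)⁻¹ * x) - f (a i * (p i)⁻¹ * x * s)) ^ 2 :=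
        Finset.sum_congr rfl fun x hx => by rw [hval1 i x hx, hval2 i x hx]
      rw [h1]
      simp only [hK]
      rw [Finset.sum_image (by intro x _ y _ h; exact mul_left_cancel h)]
    rw [Finset.sum_congr rfl (fun i _ => hstep i)]
    -- the K i are pairwise disjoint
    have hKnear : ∀ (i : Fin k) (c : G), c ∈ K i →
        ∃ w : G, w ∈ Af i ∧ wlen (S : Set G) (w⁻¹ * c) ≤ 1 := by
      intro i c hc
      simp only [hK, Finset.mem_image] at hc
      obtain ⟨x, hx, rfl⟩ := hc
      obtain ⟨u, hu, hux⟩ := hnear i x hx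
      refine ⟨a i * (p i)⁻¹ * u, (hmemT i u).mp hu, ?_⟩
      have h1 : (a i * (p i)⁻¹ * u)⁻¹ * (a i * (p i)⁻¹ * x) = u⁻¹ * x := by group
      rw [h1]
      exact hux
    have hKdisj : Set.PairwiseDisjoint ↑(Finset.univ : Finset (Fin k)) K := by
      intro i _ j _ hij
      refine Finset.disjoint_left.mpr fun c hci hcj => ?_
      obtain ⟨w1, hw1, hw1c⟩ := hKnear i c hci
      obtain ⟨w2, hw2, hw2c⟩ := hKnear j c hcj
      refine hsep i j hij w1 w2 hw1 hw2 ?_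
      have h1 := wlen_tri hgen w1 c w2
      rw [wlen_symm hgen c w2] at h1
      omega
    rw [← Finset.sum_biUnion hKdisj]
    -- compare with the tsum for f
    set FF : Finset G := (Finset.univ.biUnion K) ∪ A ∪ A.image (fun u => u * s⁻¹) with hFF
    have hsub : Finset.univ.biUnion K ⊆ FF := by
      rw [hFF]
      exact Finset.union_subset_left Finset.subset_union_left
    have hle : ∑ b ∈ Finset.univ.biUnion K, (f b - f (b * s)) ^ 2
        ≤ ∑ b ∈ FF, (f b - f (b * s)) ^ 2 :=
      Finset.sum_le_sum_of_subset_of_nonneg hsub (fun b _ _ => sq_nonneg _)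
    have hFFz : ∀ b : G, b ∉ FF → (f b - f (b * s)) ^ 2 = 0 := by
      intro b hb
      simp only [hFF, Finset.mem_union, Finset.mem_image, not_or, not_exists] at hb
      have h1 : f b = 0 := hf_zero b hb.1.2
      have h2 : f (b * s) = 0 := by
        by_contra hne
        have : b * s ∈ A := (hA _).mpr hne
        exact (hb.2 (b * s)) ⟨this, by group⟩
      rw [h1, h2]
      ring
    have hts : ∑ b ∈ FF, (f b - f (b * s)) ^ 2 = ∑' (γ : G), (f γ - f (γ * s)) ^ 2 :=
      (tsum_eq_sum hFFz).symm
    calc ∑ b ∈ Finset.univ.biUnion K, (f b - f (b * s)) ^ 2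
        ≤ ∑ b ∈ FF, (f b - f (b * s)) ^ 2 := hle
      _ = ∑' (γ : G), (f γ - f (γ * s)) ^ 2 := hts
      _ ≤ ε ^ 2 := hinv s hs
  · -- support
    intro γ hγ
    have : ∃ i : Fin k, γ ∈ T i := by
      by_contra h
      push_neg at h
      exact hγ (hgz γ h)
    obtain ⟨i, hi⟩ := this
    refine mem_ball_of_wlen_le hgen γ ?_
    have h1 := hTup i γ hi
    have h2 := hrbound i
    omega
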